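/- arXiv:1007.5361 — 7 statements merged into one kernel-verified Lean document; each statement's English description precedes it below -/
import Mathlib

section
/- Let m, a, Q, Λ be positive real numbers, let r_e and r_c be real numbers with 0 < r_e < r_c such that Δ(r_e) = 0 and Δ(r_c) = 0 where Δ(r) = (r²+a²)(1 − Λr²/3) − 2mr + Q². For a horizon radius r₀ ∈ {r_e, r_c} set η² = r₀² + a², β² = a²/η², χ = 1 + Λa²/3, ξ = (Λa²/3)/χ, and define the traces γ₀(r₀) = η²[(1−β²) + (ξ−β²)g(ξ)] and γ₁(r₀) = η²(1−ξ), where g(ξ) = (√((1−ξ)/ξ)·arctan(√(ξ/(1−ξ))) − 1)/ξ. Writing γ₀ᵉ = γ₀(r_e), γ₁ᵉ = γ₁(r_e), γ₀ᶜ = γ₀(r_c), γ₁ᶜ = γ₁(r_c), one has γ₁ᶜγ₀ᵉ − γ₁ᵉγ₀ᶜ ≠ 0 and Λ = 3(γ₀ᵉ − γ₁ᵉ + γ₁ᶜ − γ₀ᶜ)/(γ₁ᶜγ₀ᵉ − γ₁ᵉγ₀ᶜ). -/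
/-- The function `g(ξ) = (√((1−ξ)/ξ)·arctan(√(ξ/(1−ξ))) − 1)/ξ`. -/
noncomputable def gfun (ξ : ℝ) : ℝ :=
  (Real.sqrt ((1 - ξ) / ξ) * Real.arctan (Real.sqrt (ξ / (1 - ξ))) - 1) / ξ

lemma arctan_lb {t : ℝ} (ht : 0 < t) : t / (1 + t ^ 2) < Real.arctan t := by
  have hden : ∀ x : ℝ, (0:ℝ) < 1 + x ^ 2 := fun x => by positivity
  have hderiv : ∀ x : ℝ, HasDerivAt (fun x => Real.arctan x - x / (1 + x ^ 2))
      (2 * x ^ 2 / (1 + x ^ 2) ^ 2) x := by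
    intro x
    have h1 := Real.hasDerivAt_arctan x
    have h2 : HasDerivAt (fun x : ℝ => x / (1 + x ^ 2))
        ((1 * (1 + x ^ 2) - x * (2 * x)) / (1 + x ^ 2) ^ 2) x := by
      have hp : HasDerivAt (fun x : ℝ => 1 + x ^ 2) (2 * x) x := by
        simpa using ((hasDerivAt_pow 2 x).const_add 1)
      exact (hasDerivAt_id x).div hp (ne_of_gt (hden x))
    have h3 : HasDerivAt (fun x => Real.arctan x - x / (1 + x ^ 2))
        (1 / (1 + x ^ 2) - (1 * (1 + x ^ 2) - x * (2 * x)) / (1 + x ^ 2) ^ 2) x := h1.sub h2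
    convert h3 using 1
    have hx0 := ne_of_gt (hden x)
    field_simp
    ring
  have hmono : StrictMonoOn (fun x => Real.arctan x - x / (1 + x ^ 2)) (Set.Ici (0:ℝ)) := by
    apply strictMonoOn_of_deriv_pos (convex_Ici 0)
    · exact Continuous.continuousOn
        (Real.continuous_arctan.sub
          (continuous_id.div (by continuity) fun x => ne_of_gt (hden x)))
    · intro x hx
      rw [interior_Ici] at hx
      rw [(hderiv x).deriv]
      have : (0:ℝ) < x := hx
      positivity
  have h := hmono (by simp : (0:ℝ) ∈ Set.Ici 0) (le_of_lt ht : (0:ℝ) ≤ t) ht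
  simp only [Real.arctan_zero, zero_div, sub_zero, zero_sub, neg_zero] at h
  norm_num at h
  linarith

lemma one_add_gfun_pos {ξ : ℝ} (h0 : 0 < ξ) (h1 : ξ < 1) : 0 < 1 + gfun ξ := by
  have h1ξ : 0 < 1 - ξ := by linarith
  have hfrac : 0 < ξ / (1 - ξ) := by positivity
  have htpos : 0 < Real.sqrt (ξ / (1 - ξ)) := Real.sqrt_pos.mpr hfrac
  set t : ℝ := Real.sqrt (ξ / (1 - ξ)) with ht
  have ht2 : t ^ 2 = ξ / (1 - ξ) := Real.sq_sqrt hfrac.le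
  have hinv : Real.sqrt ((1 - ξ) / ξ) = 1 / t := by
    rw [ht, one_div, ← Real.sqrt_inv]
    congr 1
    rw [inv_div]
  have hone : 1 + t ^ 2 = 1 / (1 - ξ) := by
    rw [ht2]; field_simp; ring
  have harc : t / (1 + t ^ 2) < Real.arctan t := arctan_lb htpos
  have hkey : t * (1 - ξ) < Real.arctan t := by
    have heq : t / (1 + t ^ 2) = t * (1 - ξ) := by
      rw [hone]; field_simp
    linarith [heq ▸ harc]
  have h2 : 1 - ξ < (1 / t) * Real.arctan t := by
    rw [show (1 / t) * Real.arctan t = Real.arctan t / t by ring, lt_div_iff₀ htpos]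
    nlinarith
  have hg : gfun ξ = ((1 / t) * Real.arctan t - 1) / ξ := by
    rw [gfun, hinv]
  rw [hg]
  have heq : 1 + ((1 / t) * Real.arctan t - 1) / ξ
      = ((1 / t) * Real.arctan t - 1 + ξ) / ξ := by
    field_simp
    ring
  rw [heq]
  apply div_pos _ h0
  linarith

/-- Spectral formula for the cosmological constant of a Kerr-Newman de Sitter space-time. -/
theorem stmt_0 (m a Q Λ re rc : ℝ)
    (hm : 0 < m) (ha : 0 < a) (hQ : 0 < Q) (hΛ : 0 < Λ)
    (hre : 0 < re) (hlt : re < rc)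
    (hΔe : (re ^ 2 + a ^ 2) * (1 - Λ * re ^ 2 / 3) - 2 * m * re + Q ^ 2 = 0)
    (hΔc : (rc ^ 2 + a ^ 2) * (1 - Λ * rc ^ 2 / 3) - 2 * m * rc + Q ^ 2 = 0)
    (χ ξ γ0e γ1e γ0c γ1c : ℝ)
    (hχ : χ = 1 + Λ * a ^ 2 / 3)
    (hξ : ξ = (Λ * a ^ 2 / 3) / χ)
    (hγ0e : γ0e = (re ^ 2 + a ^ 2) *
      ((1 - a ^ 2 / (re ^ 2 + a ^ 2)) + (ξ - a ^ 2 / (re ^ 2 + a ^ 2)) * gfun ξ))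
    (hγ1e : γ1e = (re ^ 2 + a ^ 2) * (1 - ξ))
    (hγ0c : γ0c = (rc ^ 2 + a ^ 2) *
      ((1 - a ^ 2 / (rc ^ 2 + a ^ 2)) + (ξ - a ^ 2 / (rc ^ 2 + a ^ 2)) * gfun ξ))
    (hγ1c : γ1c = (rc ^ 2 + a ^ 2) * (1 - ξ)) :
    γ1c * γ0e - γ1e * γ0c ≠ 0 ∧
      Λ = 3 * (γ0e - γ1e + γ1c - γ0c) / (γ1c * γ0e - γ1e * γ0c) := by
  have he2 : (0:ℝ) < re ^ 2 + a ^ 2 := by positivity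
  have hc2 : (0:ℝ) < rc ^ 2 + a ^ 2 := by positivity
  have hχpos : 0 < χ := by rw [hχ]; positivity
  have hden : (0:ℝ) < 3 + Λ * a ^ 2 := by positivity
  have hξval : ξ = Λ * a ^ 2 / (3 + Λ * a ^ 2) := by
    rw [hξ, hχ]
    rw [div_eq_div_iff (by positivity) (ne_of_gt hden)]
    ring
  have hξpos : 0 < ξ := by rw [hξval]; positivity
  have hξlt : ξ < 1 := by
    rw [hξval, div_lt_one hden]; linarith
  have hg : 0 < 1 + gfun ξ := one_add_gfun_pos hξpos hξlt
  set g := gfun ξ with hgdef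
  have hD : γ1c * γ0e - γ1e * γ0c = (1 - ξ) * a ^ 2 * (re ^ 2 - rc ^ 2) * (1 + g) := by
    rw [hγ0e, hγ1e, hγ0c, hγ1c]
    field_simp
    ring
  have hN : γ0e - γ1e + γ1c - γ0c = (re ^ 2 - rc ^ 2) * ξ * (1 + g) := by
    rw [hγ0e, hγ1e, hγ0c, hγ1c]
    field_simp
    ring
  have hr2 : re ^ 2 - rc ^ 2 ≠ 0 := by nlinarith
  have hDne : γ1c * γ0e - γ1e * γ0c ≠ 0 := by
    rw [hD]
    exact mul_ne_zero (mul_ne_zero (mul_ne_zero (by linarith) (by positivity)) hr2)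
      (ne_of_gt hg)
  refine ⟨hDne, ?_⟩
  rw [eq_div_iff hDne, hD, hN]
  have hkey : Λ * ((1 - ξ) * a ^ 2) = 3 * ξ := by
    rw [hξval]
    field_simp
    ring
  linear_combination (re ^ 2 - rc ^ 2) * (1 + g) * hkey
end

section
/- Let (m, a, Q, Λ) and (m', a', Q', Λ') be two quadruples of positive real numbers, with horizon radii 0 < r_e < r_c satisfying Δ(r_e) = Δ(r_c) = 0 for Δ(r) = (r²+a²)(1 − Λr²/3) − 2mr + Q², and 0 < r_e' < r_c' satisfying Δ'(r_e') = Δ'(r_c') = 0 for Δ'(r) = (r²+a'²)(1 − Λ'r²/3) − 2m'r + Q'². Define for each quadruple and each horizon radius the trace quantities γ₀(r₀) = η²[(1−β²) + (ξ−β²)g(ξ)] and γ₁(r₀) = η²(1−ξ) (with η² = r₀²+a², β² = a²/η², ξ = (Λa²/3)/(1+Λa²/3), g(ξ) = (√((1−ξ)/ξ)·arctan(√(ξ/(1−ξ))) − 1)/ξ, and the primed analogues). If γ₀(r_e) = γ₀'(r_e'), γ₁(r_e) = γ₁'(r_e'), γ₀(r_c) = γ₀'(r_c'), and γ₁(r_c)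 = γ₁'(r_c'), then m = m', a = a', Q = Q', Λ = Λ', r_e = r_e', and r_c = r_c'. (The Kerr-Newman de Sitter space-time is uniquely determined by the union of the spectra of the event and cosmological horizons.) -/
/-- The parameter `ξ = (Λa²/3)/(1+Λa²/3)`. -/
noncomputable def xiOf (Λ a : ℝ) : ℝ := (Λ * a ^ 2 / 3) / (1 + Λ * a ^ 2 / 3)

/-- The trace `γ₀(r₀) = η²[(1−β²) + (ξ−β²)g(ξ)]` with `η² = r₀²+a²`, `β² = a²/η²`. -/
noncomputable def gamma0 (Λ a r₀ : ℝ) : ℝ :=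
  (r₀ ^ 2 + a ^ 2) * ((1 - a ^ 2 / (r₀ ^ 2 + a ^ 2)) +
    (xiOf Λ a - a ^ 2 / (r₀ ^ 2 + a ^ 2)) * gfun (xiOf Λ a))

/-- The trace `γ₁(r₀) = η²(1−ξ)` with `η² = r₀²+a²`. -/
noncomputable def gamma1 (Λ a r₀ : ℝ) : ℝ := (r₀ ^ 2 + a ^ 2) * (1 - xiOf Λ a)

open Real

lemma aux_sin {x y : ℝ} (hx : 0 < x) (hxy : x < y) (hy : y ≤ π) :
    x * Real.sin y < y * Real.sin x := by
  have hy0 : 0 < y := hx.trans hxy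
  have key := strictConcaveOn_sin_Icc.2 (Set.mem_Icc.2 ⟨hy0.le, hy⟩)
    (Set.mem_Icc.2 ⟨le_rfl, Real.pi_pos.le⟩) hy0.ne'
    (show (0:ℝ) < x / y by positivity)
    (show (0:ℝ) < 1 - x / y by rw [sub_pos]; exact (div_lt_one hy0).2 hxy) (by ring)
  simp only [smul_eq_mul, Real.sin_zero, mul_zero, add_zero] at key
  have hxy' : x / y * y = x := div_mul_cancel₀ x hy0.ne'
  rw [hxy'] at key
  have h2 := mul_lt_mul_of_pos_right key hy0
  rw [mul_right_comm, hxy'] at h2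
  linarith [h2]

lemma inj_aux {x y : ℝ} (hx : 0 < x) (hxπ : x < π) (hy : 0 < y) (hyπ : y < π)
    (h : x * Real.sin y = y * Real.sin x) : x = y := by
  rcases lt_trichotomy x y with h1 | h1 | h1
  · exact absurd h (ne_of_lt (aux_sin hx h1 hyπ.le))
  · exact h1
  · exact absurd h.symm (ne_of_lt (aux_sin hy h1 hxπ.le))

noncomputable def th (ξ : ℝ) : ℝ := Real.arctan (Real.sqrt (ξ / (1 - ξ)))

lemma th_props {ξ : ℝ} (h0 : 0 < ξ) (h1 : ξ < 1) :
    0 < th ξ ∧ th ξ < π / 2 ∧ Real.cos (th ξ) = Real.sqrt (1 - ξ) ∧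
      Real.sin (th ξ) = Real.sqrt ξ := by
  have h1' : 0 < 1 - ξ := by linarith
  have hq : 0 < ξ / (1 - ξ) := by positivity
  have h1px : 1 + Real.sqrt (ξ / (1 - ξ)) ^ 2 = (1 - ξ)⁻¹ := by
    rw [Real.sq_sqrt hq.le]; field_simp; ring
  refine ⟨Real.arctan_zero ▸ Real.arctan_strictMono (Real.sqrt_pos.2 hq), Real.arctan_lt_pi_div_two _, ?_, ?_⟩
  · rw [th, Real.cos_arctan, h1px, Real.sqrt_inv, one_div, inv_inv]
  · rw [th, Real.sin_arctan, h1px, Real.sqrt_inv, div_inv_eq_mul, ← Real.sqrt_mul hq.le,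
      div_mul_cancel₀ _ h1'.ne']

lemma gfun_eq {ξ : ℝ} (h0 : 0 < ξ) (h1 : ξ < 1) :
    ξ * gfun ξ = th ξ * Real.cos (th ξ) / Real.sin (th ξ) - 1 := by
  obtain ⟨hθ0, hθπ, hc, hs⟩ := th_props h0 h1
  have h1' : 0 < 1 - ξ := by linarith
  have hrec : Real.sqrt ((1 - ξ) / ξ) = Real.cos (th ξ) / Real.sin (th ξ) := by
    rw [hc, hs, Real.sqrt_div h1'.le]
  rw [gfun, hrec, mul_div_cancel₀ _ h0.ne']
  rw [show Real.arctan (Real.sqrt (ξ / (1 - ξ))) = th ξ from rfl]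
  ring

lemma gfun_gt_neg_one {ξ : ℝ} (h0 : 0 < ξ) (h1 : ξ < 1) : -1 < gfun ξ := by
  obtain ⟨hθ0, hθπ, hc, hs⟩ := th_props h0 h1
  have h1' : 0 < 1 - ξ := by linarith
  have hspos : 0 < Real.sin (th ξ) := by rw [hs]; positivity
  have hcpos : 0 < Real.cos (th ξ) := by rw [hc]; positivity
  have hc1 : Real.cos (th ξ) ≤ 1 := Real.cos_le_one _
  have hsin_lt : Real.sin (th ξ) < th ξ := Real.sin_lt hθ0
  have hcq : Real.cos (th ξ) ^ 2 = 1 - ξ := by rw [hc, Real.sq_sqrt h1'.le]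
  have hkey := gfun_eq h0 h1
  have hpos : Real.cos (th ξ) ^ 2 < th ξ * Real.cos (th ξ) / Real.sin (th ξ) := by
    rw [lt_div_iff₀ hspos]
    nlinarith [mul_nonneg (mul_nonneg hcpos.le hspos.le) (sub_nonneg.2 hc1),
      mul_pos hcpos (sub_pos.2 hsin_lt)]
  have hξg : ξ * (-1) < ξ * gfun ξ := by rw [hkey]; linarith [hpos, hcq]
  have := lt_of_mul_lt_mul_left hξg h0.le
  linarith

lemma xi_inj {ξ₁ ξ₂ : ℝ} (h01 : 0 < ξ₁) (h11 : ξ₁ < 1) (h02 : 0 < ξ₂) (h12 : ξ₂ < 1)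
    (h : (1 + ξ₁ * gfun ξ₁) * (1 - ξ₂) = (1 + ξ₂ * gfun ξ₂) * (1 - ξ₁)) : ξ₁ = ξ₂ := by
  obtain ⟨hθ01, hθπ1, hc1, hs1⟩ := th_props h01 h11
  obtain ⟨hθ02, hθπ2, hc2, hs2⟩ := th_props h02 h12
  have h11' : 0 < 1 - ξ₁ := by linarith
  have h12' : 0 < 1 - ξ₂ := by linarith
  have hs1pos : 0 < Real.sin (th ξ₁) := by rw [hs1]; positivity
  have hs2pos : 0 < Real.sin (th ξ₂) := by rw [hs2]; positivity
  have hc1pos : 0 < Real.cos (th ξ₁) := by rw [hc1]; positivity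
  have hc2pos : 0 < Real.cos (th ξ₂) := by rw [hc2]; positivity
  have hcq1 : Real.cos (th ξ₁) ^ 2 = 1 - ξ₁ := by rw [hc1, Real.sq_sqrt h11'.le]
  have hcq2 : Real.cos (th ξ₂) ^ 2 = 1 - ξ₂ := by rw [hc2, Real.sq_sqrt h12'.le]
  rw [gfun_eq h01 h11, gfun_eq h02 h12] at h
  have h' : th ξ₁ * Real.cos (th ξ₁) / Real.sin (th ξ₁) * Real.cos (th ξ₂) ^ 2 =
      th ξ₂ * Real.cos (th ξ₂) / Real.sin (th ξ₂) * Real.cos (th ξ₁) ^ 2 := by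
    rw [hcq1, hcq2]; linear_combination h
  have h'' : th ξ₁ * Real.cos (th ξ₁) * Real.sin (th ξ₂) * Real.cos (th ξ₂) ^ 2 =
      th ξ₂ * Real.cos (th ξ₂) * Real.sin (th ξ₁) * Real.cos (th ξ₁) ^ 2 := by
    field_simp at h'
    linear_combination (Real.cos (th ξ₁) * Real.cos (th ξ₂)) * h'
  have key : th ξ₁ * (Real.cos (th ξ₂) * Real.sin (th ξ₂)) =
      th ξ₂ * (Real.cos (th ξ₁) * Real.sin (th ξ₁)) :=
    mul_right_cancel₀ (mul_pos hc1pos hc2pos).ne' (by linear_combination h'')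
  have h2 : (2 * th ξ₁) * Real.sin (2 * th ξ₂) = (2 * th ξ₂) * Real.sin (2 * th ξ₁) := by
    rw [Real.sin_two_mul, Real.sin_two_mul]; linear_combination 4 * key
  have hθeq : 2 * th ξ₁ = 2 * th ξ₂ :=
    inj_aux (by linarith) (by linarith) (by linarith) (by linarith) h2
  have : Real.sqrt ξ₁ = Real.sqrt ξ₂ := by
    rw [← hs1, ← hs2]; congr 1; linarith
  calc ξ₁ = Real.sqrt ξ₁ ^ 2 := (Real.sq_sqrt h01.le).symm
    _ = Real.sqrt ξ₂ ^ 2 := by rw [this]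
    _ = ξ₂ := Real.sq_sqrt h02.le

lemma xi_mem {Λ a : ℝ} (hΛ : 0 < Λ) (ha : 0 < a) : 0 < xiOf Λ a ∧ xiOf Λ a < 1 := by
  have ht : 0 < Λ * a ^ 2 / 3 := by positivity
  constructor
  · unfold xiOf; positivity
  · unfold xiOf
    rw [div_lt_one (by linarith)]
    linarith

lemma gamma0_eq (Λ a r : ℝ) (h : r ^ 2 + a ^ 2 ≠ 0) :
    gamma0 Λ a r = r ^ 2 + ((r ^ 2 + a ^ 2) * xiOf Λ a - a ^ 2) * gfun (xiOf Λ a) := by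
  unfold gamma0; field_simp
  ring

set_option maxHeartbeats 1000000 in
/-- The Kerr-Newman de Sitter space-time is uniquely determined by the union of the spectra
of the event and cosmological horizons. -/
theorem stmt_1 (m a Q Λ re rc m' a' Q' Λ' re' rc' : ℝ)
    (hm : 0 < m) (ha : 0 < a) (hQ : 0 < Q) (hΛ : 0 < Λ)
    (hm' : 0 < m') (ha' : 0 < a') (hQ' : 0 < Q') (hΛ' : 0 < Λ')
    (hre : 0 < re) (hlt : re < rc) (hre' : 0 < re') (hlt' : re' < rc')
    (hΔe : (re ^ 2 + a ^ 2) * (1 - Λ * re ^ 2 / 3) - 2 * m * re + Q ^ 2 = 0)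
    (hΔc : (rc ^ 2 + a ^ 2) * (1 - Λ * rc ^ 2 / 3) - 2 * m * rc + Q ^ 2 = 0)
    (hΔe' : (re' ^ 2 + a' ^ 2) * (1 - Λ' * re' ^ 2 / 3) - 2 * m' * re' + Q' ^ 2 = 0)
    (hΔc' : (rc' ^ 2 + a' ^ 2) * (1 - Λ' * rc' ^ 2 / 3) - 2 * m' * rc' + Q' ^ 2 = 0)
    (h0e : gamma0 Λ a re = gamma0 Λ' a' re')
    (h1e : gamma1 Λ a re = gamma1 Λ' a' re')
    (h0c : gamma0 Λ a rc = gamma0 Λ' a' rc')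
    (h1c : gamma1 Λ a rc = gamma1 Λ' a' rc') :
    m = m' ∧ a = a' ∧ Q = Q' ∧ Λ = Λ' ∧ re = re' ∧ rc = rc' := by
  obtain ⟨hξ0, hξ1⟩ := xi_mem hΛ ha
  obtain ⟨hξ'0, hξ'1⟩ := xi_mem hΛ' ha'
  rw [gamma0_eq _ _ _ (by positivity), gamma0_eq _ _ _ (by positivity)] at h0e h0c
  unfold gamma1 at h1e h1c
  set ξ := xiOf Λ a with hxidef
  set ξ' := xiOf Λ' a' with hxidef'
  have hD : 0 < rc ^ 2 - re ^ 2 := by nlinarith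
  have hD' : 0 < rc' ^ 2 - re' ^ 2 := by nlinarith
  have E1 : (rc ^ 2 - re ^ 2) * (1 - ξ) = (rc' ^ 2 - re' ^ 2) * (1 - ξ') := by
    linear_combination h1c - h1e
  have E2 : (rc ^ 2 - re ^ 2) * (1 + ξ * gfun ξ) =
      (rc' ^ 2 - re' ^ 2) * (1 + ξ' * gfun ξ') := by
    linear_combination h0c - h0e
  have hratio : (1 + ξ * gfun ξ) * (1 - ξ') = (1 + ξ' * gfun ξ') * (1 - ξ) :=
    mul_right_cancel₀ (mul_pos hD (by linarith : (0:ℝ) < 1 - ξ)).ne'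
      (by linear_combination ((1 - ξ) * (1 - ξ')) * E2 - ((1 + ξ' * gfun ξ') * (1 - ξ)) * E1)
  have hξeq : ξ = ξ' := xi_inj hξ0 hξ1 hξ'0 hξ'1 hratio
  rw [← hξeq] at h1e h1c h0e
  have hone : (0:ℝ) < 1 - ξ := by linarith
  have hηe : re ^ 2 + a ^ 2 = re' ^ 2 + a' ^ 2 := mul_right_cancel₀ hone.ne' h1e
  have hηc : rc ^ 2 + a ^ 2 = rc' ^ 2 + a' ^ 2 := mul_right_cancel₀ hone.ne' h1c
  have hg := gfun_gt_neg_one hξ0 hξ1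
  have h3 : a ^ 2 * (1 + gfun ξ) = a' ^ 2 * (1 + gfun ξ) := by
    linear_combination (-1 : ℝ) * h0e + (1 + ξ * gfun ξ) * hηe
  have ha2 : a ^ 2 = a' ^ 2 := mul_right_cancel₀ (by linarith : (1:ℝ) + gfun ξ ≠ 0) h3
  have haa : a = a' := by
    have h6 : (a - a') * (a + a') = 0 := by linear_combination ha2
    rcases mul_eq_zero.1 h6 with h | h
    · linarith
    · linarith
  have hree : re = re' := by
    have h6 : (re - re') * (re + re') = 0 := by linear_combination hηe - ha2
    rcases mul_eq_zero.1 h6 with h | h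
    · linarith
    · linarith
  have hrcc : rc = rc' := by
    have h6 : (rc - rc') * (rc + rc') = 0 := by linear_combination hηc - ha2
    rcases mul_eq_zero.1 h6 with h | h
    · linarith
    · linarith
  subst haa hree hrcc
  have hΛΛ : Λ = Λ' := by
    have d1 : (0:ℝ) < 1 + Λ * a ^ 2 / 3 := by positivity
    have d2 : (0:ℝ) < 1 + Λ' * a ^ 2 / 3 := by positivity
    have hty : Λ * a ^ 2 / 3 * (1 + Λ' * a ^ 2 / 3) =
        Λ' * a ^ 2 / 3 * (1 + Λ * a ^ 2 / 3) :=
      (div_eq_div_iff d1.ne' d2.ne').1 hξeq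
    have h7 : Λ * a ^ 2 = Λ' * a ^ 2 := by linear_combination 3 * hty
    exact mul_right_cancel₀ (by positivity : a ^ 2 ≠ 0) h7
  subst hΛΛ
  have hme : 2 * (m - m') * re = Q ^ 2 - Q' ^ 2 := by linear_combination hΔe' - hΔe
  have hmc : 2 * (m - m') * rc = Q ^ 2 - Q' ^ 2 := by linear_combination hΔc' - hΔc
  have hmm : m = m' := by
    have h8 : (m - m') * (re - rc) = 0 := by linear_combination (hme - hmc) / 2
    rcases mul_eq_zero.1 h8 with h | h
    · linarith
    · linarith
  subst hmm
  have hQQ : Q = Q' := by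
    have h9 : (Q - Q') * (Q + Q') = 0 := by linear_combination -hme
    rcases mul_eq_zero.1 h9 with h | h
    · linarith
    · linarith
  exact ⟨rfl, rfl, hQQ, rfl, rfl, rfl⟩
end

section
/- Let β ∈ (0,1) and ξ ∈ [0,1), and let f(x) = (1 − ξ(1−x²))(1−x²)/(1 − β²(1−x²)). Then for every x ∈ (−1,1), −f''(x)/2 = ξ/β² + (1 − ξ/β²)·(1 − β²(1+3x²))/(1 − β²(1−x²))³. Consequently, the Gauss curvature K(x) = −f''(x)/(2η²(1−ξ)) of the horizon metric ds² = η²(1−ξ)((1/f(x))dx² + f(x)dφ²) equals (1/(η²(1−ξ)))·[ξ/β² + (1 − ξ/β²)(1 − β²(1+3x²))/(1 − β²(1−x²))³]. -/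
/-- Gauss curvature of the Kerr-Newman de Sitter horizon metric: with
`f(x) = (1 − ξ(1−x²))(1−x²)/(1 − β²(1−x²))`, for `x ∈ (−1,1)` one has
`−f''(x)/2 = ξ/β² + (1 − ξ/β²)(1 − β²(1+3x²))/(1 − β²(1−x²))³`, and consequently
`K(x) = −f''(x)/(2η²(1−ξ))` equals the displayed expression divided by `η²(1−ξ)`. -/
theorem stmt_3 (β ξ η2 : ℝ) (hβ0 : 0 < β) (hβ1 : β < 1) (hξ0 : 0 ≤ ξ) (hξ1 : ξ < 1)
    (hη2 : 0 < η2)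
    (f : ℝ → ℝ)
    (hf : ∀ x, f x = (1 - ξ * (1 - x ^ 2)) * (1 - x ^ 2) / (1 - β ^ 2 * (1 - x ^ 2))) :
    ∀ x ∈ Set.Ioo (-1 : ℝ) 1,
      (-(deriv (deriv f) x) / 2 =
        ξ / β ^ 2 + (1 - ξ / β ^ 2) * (1 - β ^ 2 * (1 + 3 * x ^ 2)) /
          (1 - β ^ 2 * (1 - x ^ 2)) ^ 3) ∧
      (-(deriv (deriv f) x) / (2 * η2 * (1 - ξ)) =
        (1 / (η2 * (1 - ξ))) * (ξ / β ^ 2 + (1 - ξ / β ^ 2) * (1 - β ^ 2 * (1 + 3 * x ^ 2)) /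
          (1 - β ^ 2 * (1 - x ^ 2)) ^ 3)) := by
  have hβ : (β : ℝ) ≠ 0 := ne_of_gt hβ0
  have hf' : f = fun y : ℝ =>
      (1 - ξ * (1 - y ^ 2)) * (1 - y ^ 2) / (1 - β ^ 2 * (1 - y ^ 2)) := funext hf
  -- the denominator never vanishes
  have hDpos : ∀ y : ℝ, 0 < 1 - β ^ 2 * (1 - y ^ 2) := by
    intro y
    nlinarith [sq_nonneg y, sq_nonneg (β * y)]
  have hDne : ∀ y : ℝ, 1 - β ^ 2 * (1 - y ^ 2) ≠ 0 := fun y => (hDpos y).ne'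
  -- derivative of the denominator
  have hDder : ∀ y : ℝ, HasDerivAt (fun z : ℝ => 1 - β ^ 2 * (1 - z ^ 2)) (2 * β ^ 2 * y) y := by
    intro y
    have h2 : HasDerivAt (fun z : ℝ => 1 - z ^ 2) (-(2 * y)) y := by
      simpa using ((hasDerivAt_pow 2 y).const_sub 1)
    have := (h2.const_mul (β ^ 2)).const_sub 1
    exact this.congr_deriv (by ring)
  -- derivative of the numerator
  have hNder : ∀ y : ℝ, HasDerivAt (fun z : ℝ => (1 - ξ * (1 - z ^ 2)) * (1 - z ^ 2))
      (2 * (2 * ξ - 1) * y - 4 * ξ * y ^ 3) y := by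
    intro y
    have h2 : HasDerivAt (fun z : ℝ => 1 - z ^ 2) (-(2 * y)) y := by
      simpa using ((hasDerivAt_pow 2 y).const_sub 1)
    have h3 : HasDerivAt (fun z : ℝ => 1 - ξ * (1 - z ^ 2)) (-(ξ * -(2 * y))) y :=
      (h2.const_mul ξ).const_sub 1
    have := h3.mul h2
    exact this.congr_deriv (by ring)
  -- explicit first derivative g
  set g : ℝ → ℝ := fun y =>
      ((2 * (2 * ξ - 1) * y - 4 * ξ * y ^ 3) * (1 - β ^ 2 * (1 - y ^ 2)) -
        (1 - ξ * (1 - y ^ 2)) * (1 - y ^ 2) * (2 * β ^ 2 * y)) /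
      (1 - β ^ 2 * (1 - y ^ 2)) ^ 2 with hg
  have hfg : deriv f = g := by
    funext y
    have h : HasDerivAt f (g y) y := by
      rw [hf']
      have := (hNder y).div (hDder y) (hDne y)
      exact this
    exact h.deriv
  intro x hx
  -- second derivative at x
  have hQder : HasDerivAt (fun y : ℝ =>
      (2 * (2 * ξ - 1) * y - 4 * ξ * y ^ 3) * (1 - β ^ 2 * (1 - y ^ 2)) -
        (1 - ξ * (1 - y ^ 2)) * (1 - y ^ 2) * (2 * β ^ 2 * y))
      ((2 * (2 * ξ - 1) - 12 * ξ * x ^ 2) * (1 - β ^ 2 * (1 - x ^ 2)) +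
        (2 * (2 * ξ - 1) * x - 4 * ξ * x ^ 3) * (2 * β ^ 2 * x) -
        ((2 * (2 * ξ - 1) * x - 4 * ξ * x ^ 3) * (2 * β ^ 2 * x) +
          (1 - ξ * (1 - x ^ 2)) * (1 - x ^ 2) * (2 * β ^ 2))) x := by
    have hA : HasDerivAt (fun y : ℝ => 2 * (2 * ξ - 1) * y - 4 * ξ * y ^ 3)
        (2 * (2 * ξ - 1) - 12 * ξ * x ^ 2) x := by
      have h1 : HasDerivAt (fun y : ℝ => y) (1 : ℝ) x := hasDerivAt_id x
      have h3 := hasDerivAt_pow 3 x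
      have := (h1.const_mul (2 * (2 * ξ - 1))).sub (h3.const_mul (4 * ξ))
      exact this.congr_deriv (by ring)
    have hC : HasDerivAt (fun y : ℝ => 2 * β ^ 2 * y) (2 * β ^ 2) x := by
      simpa using (hasDerivAt_id x).const_mul (2 * β ^ 2)
    exact (hA.mul (hDder x)).sub ((hNder x).mul hC)
  have hD2 : HasDerivAt (fun y : ℝ => (1 - β ^ 2 * (1 - y ^ 2)) ^ 2)
      (2 * (1 - β ^ 2 * (1 - x ^ 2)) ^ 1 * (2 * β ^ 2 * x)) x := (hDder x).pow 2
  have hgd := hQder.div hD2 (pow_ne_zero 2 (hDne x))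
  have hderiv2 : deriv (deriv f) x =
      (((2 * (2 * ξ - 1) - 12 * ξ * x ^ 2) * (1 - β ^ 2 * (1 - x ^ 2)) +
        (2 * (2 * ξ - 1) * x - 4 * ξ * x ^ 3) * (2 * β ^ 2 * x) -
        ((2 * (2 * ξ - 1) * x - 4 * ξ * x ^ 3) * (2 * β ^ 2 * x) +
          (1 - ξ * (1 - x ^ 2)) * (1 - x ^ 2) * (2 * β ^ 2))) *
        (1 - β ^ 2 * (1 - x ^ 2)) ^ 2 -
        ((2 * (2 * ξ - 1) * x - 4 * ξ * x ^ 3) * (1 - β ^ 2 * (1 - x ^ 2)) -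
          (1 - ξ * (1 - x ^ 2)) * (1 - x ^ 2) * (2 * β ^ 2 * x)) *
        (2 * (1 - β ^ 2 * (1 - x ^ 2)) ^ 1 * (2 * β ^ 2 * x))) /
        ((1 - β ^ 2 * (1 - x ^ 2)) ^ 2) ^ 2 := by
    rw [hfg]
    exact hgd.deriv
  have key : -(deriv (deriv f) x) / 2 =
      ξ / β ^ 2 + (1 - ξ / β ^ 2) * (1 - β ^ 2 * (1 + 3 * x ^ 2)) /
        (1 - β ^ 2 * (1 - x ^ 2)) ^ 3 := by
    have hD := hDne x
    rw [hderiv2]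
    field_simp
    ring
  refine ⟨key, ?_⟩
  have h1ξ : (1 : ℝ) - ξ ≠ 0 := by linarith
  have hne : η2 * (1 - ξ) ≠ 0 := by positivity
  have : -(deriv (deriv f) x) / (2 * η2 * (1 - ξ)) =
      (1 / (η2 * (1 - ξ))) * (-(deriv (deriv f) x) / 2) := by
    rw [div_mul_eq_div_div_swap, one_div_mul_eq_div]
    rw [div_div, div_div]
    ring_nf
  rw [this, key]
end

section
/- Let a, Λ > 0 and let r_e ≠ r_c be positive reals. Set ξ = (Λa²/3)/(1+Λa²/3), g(ξ) = (√((1−ξ)/ξ)·arctan(√(ξ/(1−ξ))) − 1)/ξ, h(ξ) = (1 + ξ·g(ξ))/(1 − ξ), and for r₀ ∈ {r_e, r_c} define η² = r₀²+a², β² = a²/η², γ₀(r₀) = η²[(1−β²) + (ξ−β²)g(ξ)], and γ₁(r₀) = η²(1−ξ). Then γ₁(r_e) ≠ γ₁(r_c) and (γ₀(r_e) − γ₀(r_c))/(γ₁(r_e) − γ₁(r_c)) = h(ξ). -/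
/-- The function `h(ξ) = (1 + ξ·g(ξ))/(1 − ξ)`. -/
noncomputable def hfun (ξ : ℝ) : ℝ := (1 + ξ * gfun ξ) / (1 - ξ)

/-- The ratio of trace differences between the two horizons equals `h(ξ)`. -/
theorem stmt_8 (a Λ re rc : ℝ) (ha : 0 < a) (hΛ : 0 < Λ)
    (hre : 0 < re) (hrc : 0 < rc) (hne : re ≠ rc)
    (ξ γ0e γ1e γ0c γ1c : ℝ)
    (hξ : ξ = (Λ * a ^ 2 / 3) / (1 + Λ * a ^ 2 / 3))
    (hγ0e : γ0e = (re ^ 2 + a ^ 2) *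
      ((1 - a ^ 2 / (re ^ 2 + a ^ 2)) + (ξ - a ^ 2 / (re ^ 2 + a ^ 2)) * gfun ξ))
    (hγ1e : γ1e = (re ^ 2 + a ^ 2) * (1 - ξ))
    (hγ0c : γ0c = (rc ^ 2 + a ^ 2) *
      ((1 - a ^ 2 / (rc ^ 2 + a ^ 2)) + (ξ - a ^ 2 / (rc ^ 2 + a ^ 2)) * gfun ξ))
    (hγ1c : γ1c = (rc ^ 2 + a ^ 2) * (1 - ξ)) :
    γ1e ≠ γ1c ∧ (γ0e - γ0c) / (γ1e - γ1c) = hfun ξ := by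
  have ht : 0 < Λ * a ^ 2 / 3 := by positivity
  have h1t : 0 < 1 + Λ * a ^ 2 / 3 := by linarith
  have hξ1 : ξ < 1 := by
    rw [hξ, div_lt_one h1t]; linarith
  have h1ξ : (0:ℝ) < 1 - ξ := by linarith
  have hee : (0:ℝ) < re ^ 2 + a ^ 2 := by positivity
  have hcc : (0:ℝ) < rc ^ 2 + a ^ 2 := by positivity
  have hsq : re ^ 2 ≠ rc ^ 2 := by
    intro h
    exact hne (by nlinarith [sq_nonneg (re - rc), sq_nonneg (re + rc)])
  have hγne : γ1e ≠ γ1c := by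
    rw [hγ1e, hγ1c]
    intro h
    apply hsq
    have := mul_right_cancel₀ (ne_of_gt h1ξ) h
    linarith
  refine ⟨hγne, ?_⟩
  have hdiff : γ1e - γ1c = (re ^ 2 - rc ^ 2) * (1 - ξ) := by
    rw [hγ1e, hγ1c]; ring
  have hdne : γ1e - γ1c ≠ 0 := sub_ne_zero.mpr hγne
  rw [hγ0e, hγ0c, hdiff, hfun]
  rw [div_eq_div_iff (by rw [← hdiff]; exact hdne) (ne_of_gt h1ξ)]
  field_simp
  ring
end

section
/- The function h : (0,1) → ℝ defined by h(ξ) = (1 + ξ·g(ξ))/(1 − ξ), where g(ξ) = (√((1−ξ)/ξ)·arctan(√(ξ/(1−ξ))) − 1)/ξ, is strictly monotone increasing on (0,1); in particular h is injective, so ξ is uniquely determined by the value h(ξ). -/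
/-- Auxiliary function: `F t = (1 + t²)·arctan t / t`. -/
noncomputable def Ffun (t : ℝ) : ℝ := (1 + t ^ 2) * Real.arctan t / t

lemma arctan_lt_self {x : ℝ} (hx : 0 < x) : Real.arctan x < x := by
  rcases lt_or_ge x (Real.pi / 2) with h | h
  · by_contra hc
    push_neg at hc
    have h3 : x < Real.tan x := Real.lt_tan hx h
    rcases eq_or_lt_of_le hc with he | hl
    · have : Real.tan x = x := by nth_rewrite 1 [he]; exact Real.tan_arctan x
      linarith
    · have h1 : Real.arctan x < Real.pi / 2 := Real.arctan_lt_pi_div_two x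
      have h2 : Real.tan x < Real.tan (Real.arctan x) :=
        Real.tan_lt_tan_of_nonneg_of_lt_pi_div_two hx.le h1 hl
      rw [Real.tan_arctan] at h2
      linarith
  · exact lt_of_lt_of_le (Real.arctan_lt_pi_div_two x) h

lemma arctan_pos' {x : ℝ} (hx : 0 < x) : 0 < Real.arctan x := by
  have := Real.arctan_strictMono hx
  rwa [Real.arctan_zero] at this

lemma Ffun_hasDerivAt {t : ℝ} (ht : 0 < t) :
    HasDerivAt Ffun (((t ^ 2 - 1) * Real.arctan t + t) / t ^ 2) t := by
  have h1 : HasDerivAt (fun t : ℝ => (1 + t ^ 2) * Real.arctan t)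
      (2 * t * Real.arctan t + (1 + t ^ 2) * (1 / (1 + t ^ 2))) t := by
    have ha := Real.hasDerivAt_arctan t
    have hb : HasDerivAt (fun t : ℝ => 1 + t ^ 2) (2 * t) t := by
      simpa using ((hasDerivAt_pow 2 t).const_add 1)
    exact hb.mul ha
  have h2 : HasDerivAt (fun t : ℝ => t⁻¹) (-(t ^ 2)⁻¹) t := by
    simpa using hasDerivAt_inv ht.ne'
  have h3 : HasDerivAt (fun y : ℝ => (1 + y ^ 2) * Real.arctan y * y⁻¹) _ t := h1.mul h2
  have ht2 : (1 : ℝ) + t ^ 2 ≠ 0 := by positivity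
  have ht' : t ≠ 0 := ht.ne'
  have hF : Ffun = fun y : ℝ => (1 + y ^ 2) * Real.arctan y * y⁻¹ := by
    funext x; simp [Ffun, div_eq_mul_inv]
  rw [hF]
  convert h3 using 1
  field_simp
  ring

lemma Ffun_strictMono : StrictMonoOn Ffun (Set.Ioi (0 : ℝ)) := by
  apply strictMonoOn_of_hasDerivWithinAt_pos (convex_Ioi (0:ℝ))
  · exact fun x hx => ((Ffun_hasDerivAt (by simpa using hx)).continuousAt).continuousWithinAt
  · intro x hx
    have hx' : (0:ℝ) < x := by simpa using interior_subset (s := Set.Ioi (0:ℝ)) hx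
    exact (Ffun_hasDerivAt hx').hasDerivWithinAt
  · intro x hx
    rw [interior_Ioi] at hx
    have hx' : (0:ℝ) < x := hx
    apply div_pos _ (by positivity)
    have ha : 0 < Real.arctan x := arctan_pos' hx'
    rcases le_or_gt 1 x with h | h
    · have h1 : 0 ≤ (x ^ 2 - 1) * Real.arctan x :=
        mul_nonneg (by nlinarith) ha.le
      linarith
    · have := arctan_lt_self hx'
      nlinarith

lemma hfun_eq {ξ : ℝ} (h0 : 0 < ξ) (h1 : ξ < 1) :
    hfun ξ = Ffun (Real.sqrt (ξ / (1 - ξ))) := by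
  have h1' : (0:ℝ) < 1 - ξ := by linarith
  set s := Real.sqrt (ξ / (1 - ξ)) with hs
  have hsq : s ^ 2 = ξ / (1 - ξ) := Real.sq_sqrt (by positivity)
  have hspos : 0 < s := Real.sqrt_pos.mpr (by positivity)
  have hinv : Real.sqrt ((1 - ξ) / ξ) = s⁻¹ := by
    rw [hs, ← Real.sqrt_inv, inv_div]
  have key : ξ * ((s⁻¹ * Real.arctan s - 1) / ξ) = s⁻¹ * Real.arctan s - 1 :=
    mul_div_cancel₀ _ h0.ne'
  have h1s : 1 + s ^ 2 = (1 - ξ)⁻¹ := by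
    rw [hsq]; field_simp; ring
  rw [hfun, gfun, hinv, key, Ffun, h1s]
  have : 1 + (s⁻¹ * Real.arctan s - 1) = s⁻¹ * Real.arctan s := by ring
  rw [this]
  simp [div_eq_mul_inv]
  ring

/-- `h` is strictly monotone increasing on `(0,1)`; in particular it is injective there,
so `ξ` is uniquely determined by the value `h(ξ)`. -/
theorem stmt_9 :
    StrictMonoOn hfun (Set.Ioo (0 : ℝ) 1) ∧ Set.InjOn hfun (Set.Ioo (0 : ℝ) 1) := by
  have hmono : StrictMonoOn hfun (Set.Ioo (0 : ℝ) 1) := by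
    intro a ha b hb hab
    rw [hfun_eq ha.1 ha.2, hfun_eq hb.1 hb.2]
    apply Ffun_strictMono
    · exact Set.mem_Ioi.mpr (Real.sqrt_pos.mpr (div_pos ha.1 (by linarith [ha.2])))
    · exact Set.mem_Ioi.mpr (Real.sqrt_pos.mpr (div_pos hb.1 (by linarith [hb.2])))
    · apply Real.sqrt_lt_sqrt (le_of_lt (div_pos ha.1 (by linarith [ha.2])))
      have h1a : (0:ℝ) < 1 - a := by linarith [ha.2]
      have h1b : (0:ℝ) < 1 - b := by linarith [hb.2]
      rw [div_lt_div_iff₀ h1a h1b]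
      nlinarith
  exact ⟨hmono, hmono.injOn⟩
end

section
/- Let a, Λ > 0 and r_e, r_c > 0 with r_e ≠ r_c. Set χ = 1 + Λa²/3, ξ = (Λa²/3)/χ, g(ξ) = (√((1−ξ)/ξ)·arctan(√(ξ/(1−ξ))) − 1)/ξ, and for r₀ ∈ {r_e, r_c} define η² = r₀²+a², β² = a²/η², γ₀(r₀) = η²[(1−β²)+(ξ−β²)g(ξ)], γ₁(r₀) = η²(1−ξ). Writing γ₀ᵉ = γ₀(r_e), γ₁ᵉ = γ₁(r_e), γ₀ᶜ = γ₀(r_c), γ₁ᶜ = γ₁(r_c), one has γ₁ᶜγ₀ᵉ − γ₁ᵉγ₀ᶜ = (1−ξ)(1+g(ξ))·a²·(r_e² − r_c²); in particular, if additionally 1+g(ξ) > 0 then γ₁ᶜγ₀ᵉ − γ₁ᵉγ₀ᶜ ≠ 0. -/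
/-- The denominator of the spectral formula for the cosmological constant:
`γ₁ᶜγ₀ᵉ − γ₁ᵉγ₀ᶜ = (1−ξ)(1+g(ξ))·a²·(r_e² − r_c²)`, which is nonzero when `1+g(ξ) > 0`. -/
theorem stmt_12 (a Λ re rc : ℝ) (ha : 0 < a) (hΛ : 0 < Λ)
    (hre : 0 < re) (hrc : 0 < rc) (hne : re ≠ rc)
    (χ ξ γ0e γ1e γ0c γ1c : ℝ)
    (hχ : χ = 1 + Λ * a ^ 2 / 3) (hξ : ξ = (Λ * a ^ 2 / 3) / χ)
    (hγ0e : γ0e = (re ^ 2 + a ^ 2) *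
      ((1 - a ^ 2 / (re ^ 2 + a ^ 2)) + (ξ - a ^ 2 / (re ^ 2 + a ^ 2)) * gfun ξ))
    (hγ1e : γ1e = (re ^ 2 + a ^ 2) * (1 - ξ))
    (hγ0c : γ0c = (rc ^ 2 + a ^ 2) *
      ((1 - a ^ 2 / (rc ^ 2 + a ^ 2)) + (ξ - a ^ 2 / (rc ^ 2 + a ^ 2)) * gfun ξ))
    (hγ1c : γ1c = (rc ^ 2 + a ^ 2) * (1 - ξ)) :
    γ1c * γ0e - γ1e * γ0c = (1 - ξ) * (1 + gfun ξ) * a ^ 2 * (re ^ 2 - rc ^ 2) ∧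
      (0 < 1 + gfun ξ → γ1c * γ0e - γ1e * γ0c ≠ 0) := by

  have hηe : (0:ℝ) < re ^ 2 + a ^ 2 := by positivity
  have hηc : (0:ℝ) < rc ^ 2 + a ^ 2 := by positivity
  have hx : 0 < Λ * a ^ 2 / 3 := by positivity
  have hχ' : 0 < χ := by rw [hχ]; linarith
  have hξ1 : ξ < 1 := by
    rw [hξ, div_lt_one hχ', hχ]; linarith
  have hmain : γ1c * γ0e - γ1e * γ0c = (1 - ξ) * (1 + gfun ξ) * a ^ 2 * (re ^ 2 - rc ^ 2) := by
    subst hγ0e hγ1e hγ0c hγ1c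
    field_simp
    ring
  refine ⟨hmain, fun hg h0 => ?_⟩
  rw [hmain] at h0
  have hsq : re ^ 2 - rc ^ 2 ≠ 0 := by
    intro h
    have : re ^ 2 = rc ^ 2 := by linarith
    exact hne (by nlinarith)
  have : (1 - ξ) * (1 + gfun ξ) * a ^ 2 ≠ 0 := by
    have h1 : 0 < 1 - ξ := by linarith
    positivity
  exact this (by
    rcases mul_eq_zero.mp h0 with h | h
    · exact h
    · exact absurd h hsq)
end

section
/- Let a, Λ > 0 and r_e, r_c > 0 with r_e ≠ r_c. With ξ = (Λa²/3)/(1+Λa²/3), g(ξ) = (√((1−ξ)/ξ)·arctan(√(ξ/(1−ξ))) − 1)/ξ, and trace quantities γ₀(r₀) = η²[(1−β²)+(ξ−β²)g(ξ)], γ₁(r₀) = η²(1−ξ) (η² = r₀²+a², β² = a²/η²) for r₀ ∈ {r_e, r_c}, writing γ₀ᵉ, γ₁ᵉ, γ₀ᶜ, γ₁ᶜ for the traces at r_e and r_c respectively, the horizon radii satisfy r_e² = γ₁ᵉ/(1−ξ) − (ξ/(1−ξ))·(γ₁ᶜγ₀ᵉ − γ₁ᵉγ₀ᶜ)/(γ₀ᵉ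 − γ₁ᵉ + γ₁ᶜ − γ₀ᶜ) and r_c² = γ₁ᶜ/(1−ξ) − (ξ/(1−ξ))·(γ₁ᶜγ₀ᵉ − γ₁ᵉγ₀ᶜ)/(γ₀ᵉ − γ₁ᵉ + γ₁ᶜ − γ₀ᶜ). -/
lemma arctan_gt_aux (t : ℝ) (ht : 0 < t) : t / (1 + t ^ 2) < Real.arctan t := by
  have h0 : 0 < Real.arctan t := by
    rw [← Real.arctan_zero]; exact Real.arctan_strictMono ht
  have h := Real.sin_lt (show (0:ℝ) < 2 * Real.arctan t by linarith)
  rw [Real.sin_two_mul, Real.sin_arctan, Real.cos_arctan] at h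
  have hs : Real.sqrt (1 + t ^ 2) ^ 2 = 1 + t ^ 2 := Real.sq_sqrt (by positivity)
  have hspos : 0 < Real.sqrt (1 + t ^ 2) := Real.sqrt_pos.mpr (by positivity)
  have hss : Real.sqrt (1 + t ^ 2) * Real.sqrt (1 + t ^ 2) = 1 + t ^ 2 :=
    Real.mul_self_sqrt (by positivity)
  have key : 2 * (t / Real.sqrt (1 + t ^ 2)) * (1 / Real.sqrt (1 + t ^ 2))
      = 2 * t / (Real.sqrt (1 + t ^ 2) * Real.sqrt (1 + t ^ 2)) := by ring
  rw [key, hss, mul_div_assoc] at h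
  linarith

lemma one_add_gfun_pos_s15 (ξ : ℝ) (h0 : 0 < ξ) (h1 : ξ < 1) :
    1 - ξ < Real.sqrt ((1 - ξ) / ξ) * Real.arctan (Real.sqrt (ξ / (1 - ξ))) := by
  set t := Real.sqrt (ξ / (1 - ξ)) with htdef
  set u := Real.sqrt ((1 - ξ) / ξ) with hudef
  have h1ξ : 0 < 1 - ξ := by linarith
  have ht : 0 < t := Real.sqrt_pos.mpr (by positivity)
  have hu : 0 < u := Real.sqrt_pos.mpr (by positivity)
  have ht2 : t ^ 2 = ξ / (1 - ξ) := Real.sq_sqrt (by positivity)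
  have hut : u * t = 1 := by
    rw [htdef, hudef, ← Real.sqrt_mul (by positivity)]
    rw [show (1 - ξ) / ξ * (ξ / (1 - ξ)) = 1 by field_simp]
    exact Real.sqrt_one
  have harc := arctan_gt_aux t ht
  have h1t : 1 + t ^ 2 = 1 / (1 - ξ) := by rw [ht2]; field_simp; ring
  have hdiv : t / (1 + t ^ 2) = t * (1 - ξ) := by rw [h1t]; field_simp
  rw [hdiv] at harc
  have hm := mul_lt_mul_of_pos_left harc hu
  calc 1 - ξ = u * (t * (1 - ξ)) := by rw [← mul_assoc, hut, one_mul]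
    _ < u * Real.arctan t := hm

/-- Spectral formulae for the horizon radii:
`r_{e,c}² = γ₁^{e,c}/(1−ξ) − (ξ/(1−ξ))·(γ₁ᶜγ₀ᵉ − γ₁ᵉγ₀ᶜ)/(γ₀ᵉ − γ₁ᵉ + γ₁ᶜ − γ₀ᶜ)`. -/
theorem stmt_15 (a Λ re rc : ℝ) (ha : 0 < a) (hΛ : 0 < Λ)
    (hre : 0 < re) (hrc : 0 < rc) (hne : re ≠ rc)
    (ξ γ0e γ1e γ0c γ1c : ℝ)
    (hξ : ξ = (Λ * a ^ 2 / 3) / (1 + Λ * a ^ 2 / 3))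
    (hγ0e : γ0e = (re ^ 2 + a ^ 2) *
      ((1 - a ^ 2 / (re ^ 2 + a ^ 2)) + (ξ - a ^ 2 / (re ^ 2 + a ^ 2)) * gfun ξ))
    (hγ1e : γ1e = (re ^ 2 + a ^ 2) * (1 - ξ))
    (hγ0c : γ0c = (rc ^ 2 + a ^ 2) *
      ((1 - a ^ 2 / (rc ^ 2 + a ^ 2)) + (ξ - a ^ 2 / (rc ^ 2 + a ^ 2)) * gfun ξ))
    (hγ1c : γ1c = (rc ^ 2 + a ^ 2) * (1 - ξ)) :
    re ^ 2 = γ1e / (1 - ξ) - (ξ / (1 - ξ)) *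
        ((γ1c * γ0e - γ1e * γ0c) / (γ0e - γ1e + γ1c - γ0c)) ∧
    rc ^ 2 = γ1c / (1 - ξ) - (ξ / (1 - ξ)) *
        ((γ1c * γ0e - γ1e * γ0c) / (γ0e - γ1e + γ1c - γ0c)) := by
  have hx : 0 < Λ * a ^ 2 / 3 := by positivity
  have hξ0 : 0 < ξ := by rw [hξ]; positivity
  have hξ1 : ξ < 1 := by
    rw [hξ, div_lt_one (by linarith)]; linarith
  have h1ξ : (0:ℝ) < 1 - ξ := by linarith
  set G := gfun ξ with hG
  have hξG : ξ * G = Real.sqrt ((1 - ξ) / ξ) * Real.arctan (Real.sqrt (ξ / (1 - ξ))) - 1 := by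
    rw [hG, gfun, mul_div_cancel₀ _ (ne_of_gt hξ0)]
  have hGpos : 0 < 1 + G := by
    have h2 := one_add_gfun_pos_s15 ξ hξ0 hξ1
    have h3 : 0 < ξ + ξ * G := by rw [hξG]; linarith
    nlinarith
  have hG1 : (1 : ℝ) + G ≠ 0 := ne_of_gt hGpos
  have hE : re ^ 2 + a ^ 2 ≠ 0 := by positivity
  have hC : rc ^ 2 + a ^ 2 ≠ 0 := by positivity
  have hsub : re ^ 2 - rc ^ 2 ≠ 0 := by
    intro h
    apply hne
    nlinarith
  have hγ0e' : γ0e = (re ^ 2 + a ^ 2) - a ^ 2 + (ξ * (re ^ 2 + a ^ 2) - a ^ 2) * G := by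
    rw [hγ0e]; field_simp
  have hγ0c' : γ0c = (rc ^ 2 + a ^ 2) - a ^ 2 + (ξ * (rc ^ 2 + a ^ 2) - a ^ 2) * G := by
    rw [hγ0c]; field_simp
  have hd : γ0e - γ1e + γ1c - γ0c = (re ^ 2 - rc ^ 2) * (ξ * (1 + G)) := by
    rw [hγ0e', hγ0c', hγ1e, hγ1c]; ring
  have hn : γ1c * γ0e - γ1e * γ0c = a ^ 2 * ((1 - ξ) * ((re ^ 2 - rc ^ 2) * (1 + G))) := by
    rw [hγ0e', hγ0c', hγ1e, hγ1c]; ring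
  have hfrac : (γ1c * γ0e - γ1e * γ0c) / (γ0e - γ1e + γ1c - γ0c) = a ^ 2 * (1 - ξ) / ξ := by
    rw [hd, hn]
    field_simp
  constructor
  · rw [hfrac, hγ1e]
    field_simp
    ring
  · rw [hfrac, hγ1c]
    field_simp
    ring
end
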